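/- Let G be the rewrite game over {a,b} with rules a^{k_1} → ε, ..., a^{k_n} → ε, b^{ℓ_1} → ε, ..., b^{ℓ_m} → ε, where 1 < k_1 ≤ ... ≤ k_n and 1 < ℓ_1 ≤ ... ≤ ℓ_m. For all i, j ≥ 0, the word u_{i,j} = b^{ℓ_1 - 1} (a b^{ℓ_1 - 1})^i (b a^{k_1 - 1})^j is a P-position of G if and only if i ≥ j. -/

import Mathlib

inductive AB | a | b
deriving DecidableEq

/-- One move of the taking-and-merging game whose rules are `a^k → ε` for `k ∈ K`
and `b^ℓ → ε` for `ℓ ∈ L`. -/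
def Step (K L : Finset ℕ) (w w' : List AB) : Prop :=
  ∃ x y : List AB, w' = x ++ y ∧
    ((∃ k ∈ K, w = x ++ List.replicate k AB.a ++ y) ∨
     (∃ l ∈ L, w = x ++ List.replicate l AB.b ++ y))

/-- The word `u_{i,j} = b^{ℓ₁-1} (a b^{ℓ₁-1})^i (b a^{k₁-1})^j`. -/
def u (k1 l1 i j : ℕ) : List AB :=
  List.replicate (l1 - 1) AB.b ++
    (List.replicate i (AB.a :: List.replicate (l1 - 1) AB.b)).flatten ++
    (List.replicate j (AB.b :: List.replicate (k1 - 1) AB.a)).flatten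

namespace Stmt4Aux

open List

lemma a_ne_b : AB.a ≠ AB.b := fun h => by cases h

lemma b_ne_a : AB.b ≠ AB.a := fun h => by cases h

/-- Decode a run-length encoding. -/
def dec (r : List (AB × ℕ)) : List AB := (r.map (fun p => List.replicate p.2 p.1)).flatten

@[simp] lemma dec_nil : dec [] = [] := rfl

@[simp] lemma dec_cons (p : AB × ℕ) (r : List (AB × ℕ)) :
    dec (p :: r) = List.replicate p.2 p.1 ++ dec r := rfl

@[simp] lemma dec_append (r s : List (AB × ℕ)) : dec (r ++ s) = dec r ++ dec s := by
  simp [dec]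

/-- A valid run-length encoding: adjacent letters differ, all counts positive. -/
def Alt (r : List (AB × ℕ)) : Prop :=
  r.Chain' (fun p q => p.1 ≠ q.1) ∧ ∀ p ∈ r, 0 < p.2

lemma Alt.tail {p : AB × ℕ} {r : List (AB × ℕ)} (h : Alt (p :: r)) : Alt r :=
  ⟨h.1.tail, fun q hq => h.2 q (mem_cons_of_mem _ hq)⟩

lemma prefix_replicate {σ : AB} {n : ℕ} {x y : List AB} (h : List.replicate n σ = x ++ y) :
    x = List.replicate x.length σ :=
  eq_replicate_length.2 fun b hb => eq_of_mem_replicate (h ▸ mem_append_left y hb : b ∈ List.replicate n σ)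

lemma suffix_replicate {σ : AB} {n : ℕ} {x y : List AB} (h : List.replicate n σ = x ++ y) :
    y = List.replicate y.length σ :=
  eq_replicate_length.2 fun b hb => eq_of_mem_replicate (h ▸ mem_append_right x hb : b ∈ List.replicate n σ)

/-- Key classification lemma: any occurrence of `σ^k` as a factor of a decoded
RLE word lands inside a single run. -/
lemma classify : ∀ (r : List (AB × ℕ)), Alt r →
    ∀ (x y : List AB) (σ : AB) (k : ℕ), 0 < k →
    x ++ List.replicate k σ ++ y = dec r →
    ∃ r₁ m r₂ p q, r = r₁ ++ (σ, m) :: r₂ ∧ k + p + q = m ∧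
      x = dec r₁ ++ List.replicate p σ ∧ y = List.replicate q σ ++ dec r₂ := by
  intro r
  induction r with
  | nil =>
    intro _ x y σ k hk h
    simp only [dec_nil, append_eq_nil_iff, append_assoc] at h
    rw [List.replicate_eq_nil_iff] at h
    omega
  | cons hd tl ih =>
    rcases hd with ⟨τ, n⟩
    intro hAlt x y σ k hk h
    have hAlt' : Alt tl := hAlt.tail
    rw [dec_cons, append_assoc] at h
    rcases List.append_eq_append_iff.1 h with ⟨a', ha1, ha2⟩ | ⟨c', hc1, hc2⟩
    · -- the factor starts inside (or after) the first run:
      -- ha1 : replicate n τ = x ++ a', ha2 : replicate k σ ++ y = a' ++ dec tl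
      have hx : x = List.replicate x.length τ := prefix_replicate ha1
      have hlen : n = x.length + a'.length := by
        have := congrArg List.length ha1; simpa using this
      cases a' with
      | nil =>
        -- factor entirely in the tail
        obtain ⟨r₁, m, r₂, p, q, e1, e2, e3, e4⟩ :=
          ih hAlt' [] y σ k hk (by simpa using ha2)
        refine ⟨(τ, n) :: r₁, m, r₂, p, q, by rw [e1]; rfl, e2, ?_, e4⟩
        have h3 : dec r₁ = [] ∧ p = 0 := by
          constructor
          · rcases append_eq_nil_iff.1 e3.symm with ⟨h', -⟩; exact h'
          · rcases append_eq_nil_iff.1 e3.symm with ⟨-, h'⟩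
            simpa [List.replicate_eq_nil_iff] using h'
        rw [dec_cons, append_assoc, h3.1, h3.2]
        simpa using ha1.symm
      | cons h0 t0 =>
        have ha' : (h0 :: t0) = List.replicate (h0 :: t0).length τ := suffix_replicate ha1
        have hh0 : h0 = τ := by
          have := congrArg (fun l => l.head?) ha'
          simpa [List.replicate_succ] using this
        rcases List.append_eq_append_iff.1 ha2 with ⟨a₂, g1, g2⟩ | ⟨c₂, g1, g2⟩
        · -- g1 : h0 :: t0 = replicate k σ ++ a₂, g2 : y = a₂ ++ dec tl
          have hστ : σ = τ := by
            obtain ⟨k', rfl⟩ : ∃ k', k = k' + 1 := ⟨k - 1, by omega⟩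
            rw [List.replicate_succ] at g1
            exact (List.cons.injEq _ _ _ _ ▸ g1).1.symm.trans hh0
          have ha2' : a₂ = List.replicate a₂.length τ := by
            apply suffix_replicate (n := (h0 :: t0).length)
            rw [← ha', g1]
          have hlen2 : (h0 :: t0).length = k + a₂.length := by
            have := congrArg List.length g1; simpa using this
          refine ⟨[], n, tl, x.length, a₂.length, by simp [hστ], by omega, ?_, ?_⟩
          · simpa [hστ] using hx
          · rw [g2, hστ, ← ha2']
        · -- g1 : replicate k σ = (h0 :: t0) ++ c₂, g2 : dec tl = c₂ ++ y
          have hστ : σ = τ := by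
            have : h0 ∈ List.replicate k σ := by rw [g1]; simp
            rw [← hh0]; exact (eq_of_mem_replicate this).symm
          cases c₂ with
          | nil =>
            have g1' : List.replicate k σ = h0 :: t0 := by simpa using g1
            refine ⟨[], n, tl, x.length, 0, by simp [hστ], ?_, ?_, ?_⟩
            · have : k = (h0 :: t0).length := by rw [← g1']; simp
              omega
            · simpa [hστ] using hx
            · simpa using g2.symm
          | cons hc tc =>
            exfalso
            have hhc : hc = σ := by
              have : hc ∈ List.replicate k σ := by rw [g1]; simp
              exact eq_of_mem_replicate this
            cases tl with
            | nil => simp at g2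
            | cons hd2 tl2 =>
              rcases hd2 with ⟨τ₂, n₂⟩
              have hτ₂ : τ ≠ τ₂ := (List.isChain_cons_cons.1 hAlt.1).1
              have hn₂ : 0 < n₂ := hAlt.2 (τ₂, n₂) (by simp)
              obtain ⟨n₂', rfl⟩ : ∃ n₂', n₂ = n₂' + 1 := ⟨n₂ - 1, by omega⟩
              rw [dec_cons] at g2
              simp only [List.replicate_succ, cons_append] at g2
              have : τ₂ = hc := (List.cons.injEq _ _ _ _ ▸ g2).1
              rw [hhc, hστ] at this
              exact hτ₂ this.symm
    · -- hc1 : x = replicate n τ ++ c', hc2 : dec tl = c' ++ (replicate k σ ++ y)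
      obtain ⟨r₁, m, r₂, p, q, e1, e2, e3, e4⟩ :=
        ih hAlt' c' y σ k hk (by rw [append_assoc]; exact hc2.symm)
      refine ⟨(τ, n) :: r₁, m, r₂, p, q, by rw [e1]; rfl, e2, ?_, e4⟩
      rw [dec_cons, append_assoc, hc1, e3]

lemma split_unique {α : Type*} {e : α} :
    ∀ (r₁ : List α) {r₂ : List α} (r₁' : List α) {r₂' : List α},
      r₁ ++ e :: r₂ = r₁' ++ e :: r₂' → e ∉ r₁ → e ∉ r₂ → r₁ = r₁' ∧ r₂ = r₂' := by
  intro r₁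
  induction r₁ with
  | nil =>
    intro r₂ r₁' r₂' h h1 h2
    cases r₁' with
    | nil => simpa using h
    | cons f t =>
      exfalso
      simp only [nil_append, cons_append, List.cons.injEq] at h
      exact h2 (h.2 ▸ (by simp : e ∈ t ++ e :: r₂'))
  | cons g t ih =>
    intro r₂ r₁' r₂' h h1 h2
    cases r₁' with
    | nil =>
      exfalso
      simp only [nil_append, cons_append, List.cons.injEq] at h
      exact h1 (h.1 ▸ mem_cons_self (a := g) (l := t))
    | cons f t' =>
      simp only [cons_append, List.cons.injEq] at h
      obtain ⟨t_eq, r_eq⟩ := ih t' h.2 (fun hm => h1 (mem_cons_of_mem _ hm)) h2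
      exact ⟨by rw [h.1, t_eq], r_eq⟩

lemma mem_flatten_replicate {α : Type*} {p : α} {i : ℕ} {L : List α}
    (h : p ∈ (List.replicate i L).flatten) : p ∈ L := by
  rcases List.mem_flatten.1 h with ⟨l, hl, hpl⟩
  rwa [List.eq_of_mem_replicate hl] at hpl

section Chains

variable {R : (AB × ℕ) → (AB × ℕ) → Prop} {p x x₀ : AB × ℕ} {rest : List (AB × ℕ)}

lemma chain_block (hxp : R x p) (hpx : R p x) (hrest : Chain' R (x :: rest)) :
    ∀ i, Chain' R (x :: (List.replicate i [p, x]).flatten ++ rest) := by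
  intro i
  induction i with
  | zero => simpa using hrest
  | succ i ih =>
    have he : (List.replicate (i + 1) [p, x]).flatten = p :: x :: (List.replicate i [p, x]).flatten := by
      simp [List.replicate_succ]
    rw [he]
    simpa [Chain'] using isChain_cons_cons.2 ⟨hxp, isChain_cons_cons.2 ⟨hpx, by exact ih⟩⟩

lemma chain_block' (h₀p : R x₀ p) (hxp : R x p) (hpx : R p x)
    (h0 : Chain' R (x₀ :: rest)) (hrest : Chain' R (x :: rest)) :
    ∀ i, Chain' R (x₀ :: (List.replicate i [p, x]).flatten ++ rest) := by
  intro i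
  cases i with
  | zero => simpa using h0
  | succ i =>
    have he : (List.replicate (i + 1) [p, x]).flatten = p :: x :: (List.replicate i [p, x]).flatten := by
      simp [List.replicate_succ]
    rw [he]
    simpa [Chain'] using isChain_cons_cons.2 ⟨h₀p, isChain_cons_cons.2 ⟨hpx, by exact chain_block hxp hpx hrest i⟩⟩

end Chains

/-- `(a b^c)^i` -/
def Ua (c i : ℕ) : List AB := (List.replicate i (AB.a :: List.replicate c AB.b)).flatten

/-- `(b a^d)^j` -/
def Wb (d j : ℕ) : List AB := (List.replicate j (AB.b :: List.replicate d AB.a)).flatten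

/-- RLE blocks for the `(a b^c)^i` part. -/
def Fr (c i : ℕ) : List (AB × ℕ) := (List.replicate i [((AB.a : AB), 1), (AB.b, c)]).flatten

/-- RLE blocks for the `(b a^d)^j` part. -/
def Gr (d j : ℕ) : List (AB × ℕ) := (List.replicate j [((AB.b : AB), 1), (AB.a, d)]).flatten

@[simp] lemma Ua_zero (c : ℕ) : Ua c 0 = [] := rfl
@[simp] lemma Wb_zero (d : ℕ) : Wb d 0 = [] := rfl
@[simp] lemma Fr_zero (c : ℕ) : Fr c 0 = [] := rfl
@[simp] lemma Gr_zero (d : ℕ) : Gr d 0 = [] := rfl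

lemma Ua_succ (c i : ℕ) : Ua c (i + 1) = (AB.a :: List.replicate c AB.b) ++ Ua c i := by
  simp [Ua, List.replicate_succ]

lemma Ua_succ' (c i : ℕ) : Ua c (i + 1) = Ua c i ++ (AB.a :: List.replicate c AB.b) := by
  simp [Ua, List.replicate_succ']

lemma Wb_succ (d j : ℕ) : Wb d (j + 1) = (AB.b :: List.replicate d AB.a) ++ Wb d j := by
  simp [Wb, List.replicate_succ]

lemma Fr_succ (c i : ℕ) : Fr c (i + 1) = ((AB.a : AB), 1) :: (AB.b, c) :: Fr c i := by
  simp [Fr, List.replicate_succ]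

lemma Fr_succ' (c i : ℕ) : Fr c (i + 1) = Fr c i ++ [((AB.a : AB), 1), (AB.b, c)] := by
  simp [Fr, List.replicate_succ']

lemma dec_Fr (c i : ℕ) : dec (Fr c i) = Ua c i := by
  induction i with
  | zero => rfl
  | succ i ih => rw [Fr_succ, Ua_succ, dec_cons, dec_cons, ih]; simp

lemma dec_Gr (d j : ℕ) : dec (Gr d j) = Wb d j := by
  induction j with
  | zero => rfl
  | succ j ih =>
    have : Gr d (j + 1) = ((AB.b : AB), 1) :: (AB.a, d) :: Gr d j := by
      simp [Gr, List.replicate_succ]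
    rw [this, Wb_succ, dec_cons, dec_cons, ih]; simp

lemma mem_Fr {c i : ℕ} {p : AB × ℕ} (h : p ∈ Fr c i) : p = ((AB.a : AB), 1) ∨ p = (AB.b, c) := by
  have := mem_flatten_replicate h
  simpa using this

lemma mem_Gr {d j : ℕ} {p : AB × ℕ} (h : p ∈ Gr d j) : p = ((AB.b : AB), 1) ∨ p = (AB.a, d) := by
  have := mem_flatten_replicate h
  simpa using this

/-- No move is possible when all a-runs are shorter than every a-rule and all
b-runs shorter than every b-rule. -/
lemma noStep {K L : Finset ℕ} {k1 l1 : ℕ}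
    (hkmin : ∀ k ∈ K, k1 ≤ k) (hlmin : ∀ l ∈ L, l1 ≤ l)
    (hkgt : ∀ k ∈ K, 1 < k) (hlgt : ∀ l ∈ L, 1 < l)
    {r : List (AB × ℕ)} (hAlt : Alt r)
    (ha : ∀ m, (AB.a, m) ∈ r → m < k1) (hb : ∀ m, (AB.b, m) ∈ r → m < l1) :
    ∀ w', ¬ Step K L (dec r) w' := by
  rintro w' ⟨x, y, -, ⟨k, hk, hw⟩ | ⟨l, hl, hw⟩⟩
  · obtain ⟨r₁, m, r₂, p, q, e1, e2, -, -⟩ :=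
      classify r hAlt x y AB.a k (by have := hkgt k hk; omega) hw.symm
    have hmem : (AB.a, m) ∈ r := by rw [e1]; simp
    have := ha m hmem
    have := hkmin k hk
    omega
  · obtain ⟨r₁, m, r₂, p, q, e1, e2, -, -⟩ :=
      classify r hAlt x y AB.b l (by have := hlgt l hl; omega) hw.symm
    have hmem : (AB.b, m) ∈ r := by rw [e1]; simp
    have := hb m hmem
    have := hlmin l hl
    omega

/-- Unique move: deleting the unique maximal b-run `b^{l1}`. -/
lemma uniqueStep_b {K L : Finset ℕ} {k1 l1 : ℕ}
    (hkmin : ∀ k ∈ K, k1 ≤ k) (hlmin : ∀ l ∈ L, l1 ≤ l)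
    (hkgt : ∀ k ∈ K, 1 < k) (hlgt : ∀ l ∈ L, 1 < l)
    {r₁c r₂c : List (AB × ℕ)} (hAlt : Alt (r₁c ++ (AB.b, l1) :: r₂c))
    (ha : ∀ m, (AB.a, m) ∈ r₁c ++ (AB.b, l1) :: r₂c → m < k1)
    (hb : ∀ m, (AB.b, m) ∈ r₁c ++ (AB.b, l1) :: r₂c → m ≤ l1)
    (hb1 : (AB.b, l1) ∉ r₁c) (hb2 : (AB.b, l1) ∉ r₂c) :
    ∀ w', Step K L (dec (r₁c ++ (AB.b, l1) :: r₂c)) w' → w' = dec r₁c ++ dec r₂c := by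
  rintro w' ⟨x, y, hxy, ⟨k, hk, hw⟩ | ⟨l, hl, hw⟩⟩
  · exfalso
    obtain ⟨r₁, m, r₂, p, q, e1, e2, -, -⟩ :=
      classify _ hAlt x y AB.a k (by have := hkgt k hk; omega) hw.symm
    have hmem : (AB.a, m) ∈ r₁c ++ (AB.b, l1) :: r₂c := by rw [e1]; simp
    have := ha m hmem
    have := hkmin k hk
    omega
  · obtain ⟨r₁, m, r₂, p, q, e1, e2, e3, e4⟩ :=
      classify _ hAlt x y AB.b l (by have := hlgt l hl; omega) hw.symm
    have hmem : (AB.b, m) ∈ r₁c ++ (AB.b, l1) :: r₂c := by rw [e1]; simp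
    have hml : m ≤ l1 := hb m hmem
    have hl1l : l1 ≤ l := hlmin l hl
    have hm : m = l1 := by omega
    have hp : p = 0 := by omega
    have hq : q = 0 := by omega
    subst hm hp hq
    obtain ⟨er₁, er₂⟩ := split_unique r₁c r₁ e1 hb1 hb2
    rw [hxy, e3, e4, er₁, er₂]
    simp

/-- Unique move: deleting the unique maximal a-run `a^{k1}`. -/
lemma uniqueStep_a {K L : Finset ℕ} {k1 l1 : ℕ}
    (hkmin : ∀ k ∈ K, k1 ≤ k) (hlmin : ∀ l ∈ L, l1 ≤ l)
    (hkgt : ∀ k ∈ K, 1 < k) (hlgt : ∀ l ∈ L, 1 < l)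
    {r₁c r₂c : List (AB × ℕ)} (hAlt : Alt (r₁c ++ (AB.a, k1) :: r₂c))
    (hb : ∀ m, (AB.b, m) ∈ r₁c ++ (AB.a, k1) :: r₂c → m < l1)
    (ha : ∀ m, (AB.a, m) ∈ r₁c ++ (AB.a, k1) :: r₂c → m ≤ k1)
    (ha1 : (AB.a, k1) ∉ r₁c) (ha2 : (AB.a, k1) ∉ r₂c) :
    ∀ w', Step K L (dec (r₁c ++ (AB.a, k1) :: r₂c)) w' → w' = dec r₁c ++ dec r₂c := by
  rintro w' ⟨x, y, hxy, ⟨k, hk, hw⟩ | ⟨l, hl, hw⟩⟩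
  · obtain ⟨r₁, m, r₂, p, q, e1, e2, e3, e4⟩ :=
      classify _ hAlt x y AB.a k (by have := hkgt k hk; omega) hw.symm
    have hmem : (AB.a, m) ∈ r₁c ++ (AB.a, k1) :: r₂c := by rw [e1]; simp
    have hmk : m ≤ k1 := ha m hmem
    have hk1k : k1 ≤ k := hkmin k hk
    have hm : m = k1 := by omega
    have hp : p = 0 := by omega
    have hq : q = 0 := by omega
    subst hm hp hq
    obtain ⟨er₁, er₂⟩ := split_unique r₁c r₁ e1 ha1 ha2
    rw [hxy, e3, e4, er₁, er₂]
    simp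
  · exfalso
    obtain ⟨r₁, m, r₂, p, q, e1, e2, -, -⟩ :=
      classify _ hAlt x y AB.b l (by have := hlgt l hl; omega) hw.symm
    have hmem : (AB.b, m) ∈ r₁c ++ (AB.a, k1) :: r₂c := by rw [e1]; simp
    have := hb m hmem
    have := hlmin l hl
    omega

end Stmt4Aux

open List Stmt4Aux in
theorem stmt4 (K L : Finset ℕ) (k1 l1 : ℕ)
    (hk1 : k1 ∈ K) (hl1 : l1 ∈ L)
    (hkmin : ∀ k ∈ K, k1 ≤ k) (hlmin : ∀ l ∈ L, l1 ≤ l)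
    (hkgt : ∀ k ∈ K, 1 < k) (hlgt : ∀ l ∈ L, 1 < l)
    (P : List AB → Prop)
    (hP : ∀ w, P w ↔ ∀ w', Step K L w w' → ¬ P w') :
    ∀ i j : ℕ, P (u k1 l1 i j) ↔ j ≤ i := by
  have hk2 : 2 ≤ k1 := hkgt k1 hk1
  have hl2 : 2 ≤ l1 := hlgt l1 hl1
  obtain ⟨d, rfl⟩ : ∃ d, k1 = d + 1 := ⟨k1 - 1, by omega⟩
  obtain ⟨c, rfl⟩ : ∃ c, l1 = c + 1 := ⟨l1 - 1, by omega⟩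
  have hc1 : 1 ≤ c := by omega
  have hd1 : 1 ≤ d := by omega
  have hrot : ∀ (n : ℕ) (x : AB) (l : List AB),
      List.replicate n x ++ x :: l = x :: (List.replicate n x ++ l) := by
    intro n x l
    rw [← singleton_append, ← append_assoc, ← replicate_succ', replicate_succ, cons_append]
  have hu : ∀ i j, u (d + 1) (c + 1) i j
      = List.replicate c AB.b ++ Ua c i ++ Wb d j := by
    intro i j; simp [u, Ua, Wb]
  -- chain facts
  have chainG : ∀ (m j : ℕ),
      Chain' (fun p q : AB × ℕ => p.1 ≠ q.1) ((AB.a, m) :: Gr d j) := by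
    intro m j
    simpa [Gr] using chain_block' (x₀ := (AB.a, m)) (p := ((AB.b : AB), 1)) (x := (AB.a, d))
      (rest := ([] : List (AB × ℕ))) a_ne_b a_ne_b b_ne_a (isChain_singleton _) (isChain_singleton _) j
  have chainF : ∀ (i : ℕ) (rest : List (AB × ℕ)),
      Chain' (fun p q : AB × ℕ => p.1 ≠ q.1) ((AB.b, c) :: rest) →
      Chain' (fun p q : AB × ℕ => p.1 ≠ q.1) ((AB.b, c) :: (Fr c i ++ rest)) := by
    intro i rest h
    simpa [Fr] using chain_block (x := (AB.b, c)) (p := ((AB.a : AB), 1)) b_ne_a a_ne_b h i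
  -- Alt facts
  have altU : ∀ i, Alt ((AB.b, c) :: Fr c i) := by
    intro i
    refine ⟨by simpa using chainF i [] (isChain_singleton _), ?_⟩
    intro p hp
    rcases mem_cons.1 hp with rfl | hp
    · exact hc1
    · rcases mem_Fr hp with rfl | rfl
      · exact one_pos
      · exact hc1
  have altW : ∀ j, Alt ((AB.a, d) :: Gr d j) := by
    intro j
    refine ⟨chainG d j, ?_⟩
    intro p hp
    rcases mem_cons.1 hp with rfl | hp
    · exact hd1
    · rcases mem_Gr hp with rfl | rfl
      · exact one_pos
      · exact hd1
  have altUp : ∀ i j,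
      Alt (((AB.b, c) :: (Fr c i ++ [((AB.a : AB), 1)])) ++ (AB.b, c + 1) :: (AB.a, d) :: Gr d j) := by
    intro i j
    constructor
    · have hrest : Chain' (fun p q : AB × ℕ => p.1 ≠ q.1)
          ((AB.b, c) :: ((AB.a : AB), 1) :: (AB.b, c + 1) :: (AB.a, d) :: Gr d j) :=
        isChain_cons_cons.2 ⟨b_ne_a, isChain_cons_cons.2 ⟨a_ne_b, isChain_cons_cons.2 ⟨b_ne_a, chainG d j⟩⟩⟩
      simpa [append_assoc] using chainF i _ hrest
    · intro p hp
      rcases mem_append.1 hp with h | h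
      · rcases mem_cons.1 h with rfl | h
        · exact hc1
        rcases mem_append.1 h with h | h
        · rcases mem_Fr h with rfl | rfl
          · exact one_pos
          · exact hc1
        · rcases mem_singleton.1 h with rfl; exact one_pos
      · rcases mem_cons.1 h with rfl | h
        · omega
        rcases mem_cons.1 h with rfl | h
        · exact hd1
        rcases mem_Gr h with rfl | rfl
        · exact one_pos
        · exact hd1
  have altV : ∀ i j,
      Alt (((AB.b, c) :: Fr c i) ++ (AB.a, d + 1) :: Gr d j) := by
    intro i j
    constructor
    · have hrest : Chain' (fun p q : AB × ℕ => p.1 ≠ q.1)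
          ((AB.b, c) :: (AB.a, d + 1) :: Gr d j) :=
        isChain_cons_cons.2 ⟨b_ne_a, chainG (d + 1) j⟩
      simpa [append_assoc] using chainF i _ hrest
    · intro p hp
      rcases mem_append.1 hp with h | h
      · rcases mem_cons.1 h with rfl | h
        · exact hc1
        rcases mem_Fr h with rfl | rfl
        · exact one_pos
        · exact hc1
      · rcases mem_cons.1 h with rfl | h
        · omega
        rcases mem_Gr h with rfl | rfl
        · exact one_pos
        · exact hd1
  -- membership bounds
  have haU : ∀ i m, (AB.a, m) ∈ (AB.b, c) :: Fr c i → m < d + 1 := by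
    intro i m hm
    rcases mem_cons.1 hm with h | h
    · simp at h
    rcases mem_Fr h with h | h <;> simp at h <;> omega
  have hbU : ∀ i m, (AB.b, m) ∈ (AB.b, c) :: Fr c i → m < c + 1 := by
    intro i m hm
    rcases mem_cons.1 hm with h | h
    · simp at h <;> omega
    rcases mem_Fr h with h | h <;> simp at h <;> omega
  have haW : ∀ j m, (AB.a, m) ∈ (AB.a, d) :: Gr d j → m < d + 1 := by
    intro j m hm
    rcases mem_cons.1 hm with h | h
    · simp at h <;> omega
    rcases mem_Gr h with h | h <;> simp at h <;> omega
  have hbW : ∀ j m, (AB.b, m) ∈ (AB.a, d) :: Gr d j → m < c + 1 := by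
    intro j m hm
    rcases mem_cons.1 hm with h | h
    · simp at h
    rcases mem_Gr h with h | h <;> simp at h <;> omega
  have memUp : ∀ i j (p : AB × ℕ),
      p ∈ ((AB.b, c) :: (Fr c i ++ [((AB.a : AB), 1)])) ++ (AB.b, c + 1) :: (AB.a, d) :: Gr d j →
      p = (AB.b, c) ∨ p = ((AB.a : AB), 1) ∨ p = (AB.b, c + 1) ∨ p = (AB.a, d) ∨
        p = ((AB.b : AB), 1) := by
    intro i j p hp
    rcases mem_append.1 hp with h | h
    · rcases mem_cons.1 h with rfl | h
      · tauto
      rcases mem_append.1 h with h | h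
      · rcases mem_Fr h with rfl | rfl <;> tauto
      · rcases mem_singleton.1 h with rfl; tauto
    · rcases mem_cons.1 h with rfl | h
      · tauto
      rcases mem_cons.1 h with rfl | h
      · tauto
      rcases mem_Gr h with rfl | rfl <;> tauto
  have memV : ∀ i j (p : AB × ℕ),
      p ∈ ((AB.b, c) :: Fr c i) ++ (AB.a, d + 1) :: Gr d j →
      p = (AB.b, c) ∨ p = ((AB.a : AB), 1) ∨ p = (AB.a, d + 1) ∨ p = ((AB.b : AB), 1) ∨
        p = (AB.a, d) := by
    intro i j p hp
    rcases mem_append.1 hp with h | h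
    · rcases mem_cons.1 h with rfl | h
      · tauto
      rcases mem_Fr h with rfl | rfl <;> tauto
    · rcases mem_cons.1 h with rfl | h
      · tauto
      rcases mem_Gr h with rfl | rfl <;> tauto
  have haUp : ∀ i j m,
      (AB.a, m) ∈ ((AB.b, c) :: (Fr c i ++ [((AB.a : AB), 1)])) ++ (AB.b, c + 1) :: (AB.a, d) :: Gr d j →
      m < d + 1 := by
    intro i j m hm
    rcases memUp i j _ hm with h | h | h | h | h <;> simp at h <;> omega
  have hbUp : ∀ i j m,
      (AB.b, m) ∈ ((AB.b, c) :: (Fr c i ++ [((AB.a : AB), 1)])) ++ (AB.b, c + 1) :: (AB.a, d) :: Gr d j →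
      m ≤ c + 1 := by
    intro i j m hm
    rcases memUp i j _ hm with h | h | h | h | h <;> simp at h <;> omega
  have hbV : ∀ i j m,
      (AB.b, m) ∈ ((AB.b, c) :: Fr c i) ++ (AB.a, d + 1) :: Gr d j → m < c + 1 := by
    intro i j m hm
    rcases memV i j _ hm with h | h | h | h | h <;> simp at h <;> omega
  have haV : ∀ i j m,
      (AB.a, m) ∈ ((AB.b, c) :: Fr c i) ++ (AB.a, d + 1) :: Gr d j → m ≤ d + 1 := by
    intro i j m hm
    rcases memV i j _ hm with h | h | h | h | h <;> simp at h <;> omega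
  have hnotUp1 : ∀ i, (AB.b, c + 1) ∉ (AB.b, c) :: (Fr c i ++ [((AB.a : AB), 1)]) := by
    intro i h
    rcases mem_cons.1 h with h | h
    · simp at h <;> omega
    rcases mem_append.1 h with h | h
    · rcases mem_Fr h with h | h <;> simp at h <;> omega
    · simp at h
  have hnotUp2 : ∀ j, (AB.b, c + 1) ∉ (AB.a, d) :: Gr d j := by
    intro j h
    rcases mem_cons.1 h with h | h
    · simp at h
    rcases mem_Gr h with h | h <;> simp at h <;> omega
  have hnotV1 : ∀ i, (AB.a, d + 1) ∉ (AB.b, c) :: Fr c i := by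
    intro i h
    rcases mem_cons.1 h with h | h
    · simp at h
    rcases mem_Fr h with h | h <;> simp at h <;> omega
  have hnotV2 : ∀ j, (AB.a, d + 1) ∉ Gr d j := by
    intro j h
    rcases mem_Gr h with h | h <;> simp at h <;> omega
  -- word identities
  have hU0 : ∀ i, u (d + 1) (c + 1) i 0 = dec ((AB.b, c) :: Fr c i) := by
    intro i; rw [hu]; simp [dec_Fr, append_assoc]
  have hWdec : ∀ j, List.replicate d AB.a ++ Wb d j = dec ((AB.a, d) :: Gr d j) := by
    intro j; simp [dec_Gr]
  have h0eq : ∀ j, u (d + 1) (c + 1) 0 (j + 1)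
      = [] ++ List.replicate (c + 1) AB.b ++ (List.replicate d AB.a ++ Wb d j) := by
    intro j; rw [hu]; simp [Wb_succ, replicate_succ, hrot, append_assoc]
  have idUp : ∀ i j, u (d + 1) (c + 1) (i + 1) (j + 1)
      = dec ((((AB.b, c) :: (Fr c i ++ [((AB.a : AB), 1)])) ++ (AB.b, c + 1) :: (AB.a, d) :: Gr d j)) := by
    intro i j
    rw [hu]
    simp [Ua_succ', Wb_succ, dec_Fr, dec_Gr, replicate_succ, hrot, append_assoc]
  have idSplit : ∀ i j,
      dec ((AB.b, c) :: (Fr c i ++ [((AB.a : AB), 1)])) ++ dec ((AB.a, d) :: Gr d j)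
      = List.replicate c AB.b ++ Ua c i ++ List.replicate (d + 1) AB.a ++ Wb d j := by
    intro i j
    simp [dec_Fr, dec_Gr, replicate_succ, append_assoc]
  have idV : ∀ i j,
      List.replicate c AB.b ++ Ua c i ++ List.replicate (d + 1) AB.a ++ Wb d j
      = dec (((AB.b, c) :: Fr c i) ++ (AB.a, d + 1) :: Gr d j) := by
    intro i j
    simp [dec_Fr, dec_Gr, append_assoc]
  have idSplitV : ∀ i j,
      dec ((AB.b, c) :: Fr c i) ++ dec (Gr d j) = u (d + 1) (c + 1) i j := by
    intro i j
    rw [hu]; simp [dec_Fr, dec_Gr, append_assoc]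
  -- P-positions with no moves
  have hPU : ∀ i, P (u (d + 1) (c + 1) i 0) := by
    intro i
    rw [hP]
    intro w' hs
    rw [hU0 i] at hs
    exact absurd hs (noStep hkmin hlmin hkgt hlgt (altU i) (haU i) (hbU i) w')
  have hPW : ∀ j, P (List.replicate d AB.a ++ Wb d j) := by
    intro j
    rw [hP]
    intro w' hs
    rw [hWdec j] at hs
    exact absurd hs (noStep hkmin hlmin hkgt hlgt (altW j) (haW j) (hbW j) w')
  have hN0 : ∀ j, ¬ P (u (d + 1) (c + 1) 0 (j + 1)) := by
    intro j hp
    have hstep : Step K L (u (d + 1) (c + 1) 0 (j + 1)) (List.replicate d AB.a ++ Wb d j) :=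
      ⟨[], List.replicate d AB.a ++ Wb d j, by simp, Or.inr ⟨c + 1, hl1, h0eq j⟩⟩
    exact (hP _).1 hp _ hstep (hPW j)
  -- the key reduction
  have key : ∀ i j, P (u (d + 1) (c + 1) (i + 1) (j + 1)) ↔ P (u (d + 1) (c + 1) i j) := by
    intro i j
    have sUp : Step K L (u (d + 1) (c + 1) (i + 1) (j + 1))
        (List.replicate c AB.b ++ Ua c i ++ List.replicate (d + 1) AB.a ++ Wb d j) := by
      refine ⟨List.replicate c AB.b ++ Ua c i ++ [AB.a], List.replicate d AB.a ++ Wb d j,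
        ?_, Or.inr ⟨c + 1, hl1, ?_⟩⟩
      · simp [replicate_succ, append_assoc]
      · rw [hu]
        simp [Ua_succ', Wb_succ, replicate_succ, hrot, append_assoc]
    have sV : Step K L (List.replicate c AB.b ++ Ua c i ++ List.replicate (d + 1) AB.a ++ Wb d j)
        (u (d + 1) (c + 1) i j) := by
      refine ⟨List.replicate c AB.b ++ Ua c i, Wb d j, ?_, Or.inl ⟨d + 1, hk1, ?_⟩⟩
      · rw [hu]
      · simp [append_assoc]
    have cUp : ∀ w', Step K L (u (d + 1) (c + 1) (i + 1) (j + 1)) w' →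
        w' = List.replicate c AB.b ++ Ua c i ++ List.replicate (d + 1) AB.a ++ Wb d j := by
      intro w' hs
      rw [idUp i j] at hs
      have := uniqueStep_b hkmin hlmin hkgt hlgt (altUp i j) (haUp i j) (hbUp i j)
        (hnotUp1 i) (hnotUp2 j) w' hs
      rw [this, idSplit i j]
    have cV : ∀ w', Step K L
        (List.replicate c AB.b ++ Ua c i ++ List.replicate (d + 1) AB.a ++ Wb d j) w' →
        w' = u (d + 1) (c + 1) i j := by
      intro w' hs
      rw [idV i j] at hs
      have := uniqueStep_a hkmin hlmin hkgt hlgt (altV i j) (hbV i j) (haV i j)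
        (hnotV1 i) (hnotV2 j) w' hs
      rw [this, idSplitV i j]
    have h1 : P (u (d + 1) (c + 1) (i + 1) (j + 1)) ↔
        ¬ P (List.replicate c AB.b ++ Ua c i ++ List.replicate (d + 1) AB.a ++ Wb d j) := by
      rw [hP]
      constructor
      · intro h; exact h _ sUp
      · intro h w' hs; rw [cUp w' hs]; exact h
    have h2 : P (List.replicate c AB.b ++ Ua c i ++ List.replicate (d + 1) AB.a ++ Wb d j) ↔
        ¬ P (u (d + 1) (c + 1) i j) := by
      rw [hP]
      constructor
      · intro h; exact h _ sV
      · intro h w' hs; rw [cV w' hs]; exact h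
    rw [h1, h2, not_not]
  intro i
  induction i with
  | zero =>
    intro j
    cases j with
    | zero => exact iff_of_true (hPU 0) le_rfl
    | succ j => exact iff_of_false (hN0 j) (by omega)
  | succ i ih =>
    intro j
    cases j with
    | zero => exact iff_of_true (hPU (i + 1)) (by omega)
    | succ j =>
      rw [key i j, ih j]
      omega
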